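/- arXiv:2408.09963 — 2 statements merged into one kernel-verified Lean document; each statement's English description precedes it below -/
import Mathlib

section
/- For integers d ≥ e ≥ i+1 ≥ 1, one has C_{d,e-1,i,q} · q^{e-1} · (q^{d-i} - 1) + C_{d,e-1,i+1,q} = C_{d,e,i+1,q}, where C_{d,e,s,q} = [d choose s]_q [e choose s]_q (q^s-1)(q^s-q)···(q^s-q^{s-1}). -/
open Polynomial

/-- The Gaussian binomial coefficient `[n choose k]_q` as a polynomial in `q`. -/
noncomputable def gaussBinom : ℕ → ℕ → Polynomial ℤ
  | _, 0 => 1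
  | 0, _ + 1 => 0
  | n + 1, k + 1 => gaussBinom n k + X ^ (k + 1) * gaussBinom n (k + 1)

/-- `C_{d,e,s,q} = [d choose s]_q [e choose s]_q (q^s-1)(q^s-q)⋯(q^s-q^{s-1})`. -/
noncomputable def Cpoly (d e s : ℕ) : Polynomial ℤ :=
  gaussBinom d s * gaussBinom e s *
    ∏ j ∈ Finset.range s, ((X : Polynomial ℤ) ^ s - X ^ j)

lemma gaussBinom_eq_zero : ∀ n k : ℕ, n < k → gaussBinom n k = 0 := by
  intro n
  induction n with
  | zero =>
    intro k hk
    match k with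
    | k + 1 => simp [gaussBinom]
  | succ n ih =>
    intro k hk
    match k with
    | k + 1 =>
      have h1 : n < k := by omega
      have h2 : n < k + 1 := by omega
      simp [gaussBinom, ih k h1, ih (k + 1) h2]

lemma gaussBinom_key : ∀ n k : ℕ,
    gaussBinom n k * ((X : Polynomial ℤ) ^ (n - k) - 1) =
      gaussBinom n (k + 1) * ((X : Polynomial ℤ) ^ (k + 1) - 1) := by
  intro n
  induction n with
  | zero =>
    intro k
    match k with
    | 0 => simp [gaussBinom]
    | k + 1 => simp [gaussBinom]
  | succ n ih =>
    intro k
    match k with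
    | 0 =>
      have h := ih 0
      simp only [Nat.sub_zero] at h ⊢
      show (1 : Polynomial ℤ) * (X ^ (n + 1) - 1) =
        (gaussBinom n 0 + X ^ 1 * gaussBinom n 1) * (X ^ 1 - 1)
      have h0 : gaussBinom n 0 = 1 := by cases n <;> rfl
      rw [h0] at h ⊢
      linear_combination X * h
    | k + 1 =>
      by_cases hkn : n < k
      · rw [gaussBinom_eq_zero (n + 1) (k + 1) (by omega),
          gaussBinom_eq_zero (n + 1) (k + 2) (by omega)]
        simp
      · push_neg at hkn
        show (gaussBinom n k + X ^ (k + 1) * gaussBinom n (k + 1)) *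
            ((X : Polynomial ℤ) ^ (n + 1 - (k + 1)) - 1) =
          (gaussBinom n (k + 1) + X ^ (k + 2) * gaussBinom n (k + 2)) *
            ((X : Polynomial ℤ) ^ (k + 2) - 1)
        rw [Nat.succ_sub_succ]
        rcases eq_or_lt_of_le hkn with heq | hlt
        · subst heq
          rw [Nat.sub_self]
          rw [gaussBinom_eq_zero k (k + 1) (by omega),
            gaussBinom_eq_zero k (k + 2) (by omega)]
          ring
        · have h3 : (X : Polynomial ℤ) ^ (n - k) = X * X ^ (n - (k + 1)) := by
            rw [← pow_succ']
            congr 1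
            omega
          linear_combination ih k + (X * X ^ (k + 1)) * ih (k + 1) +
            (X ^ (k + 1) * gaussBinom n (k + 1)) * h3

lemma prod_succ_factor (i : ℕ) :
    (∏ j ∈ Finset.range (i + 1), ((X : Polynomial ℤ) ^ (i + 1) - X ^ j)) =
      ((X : Polynomial ℤ) ^ (i + 1) - 1) * X ^ i *
        ∏ j ∈ Finset.range i, ((X : Polynomial ℤ) ^ i - X ^ j) := by
  rw [Finset.prod_range_succ']
  have h : ∀ j, ((X : Polynomial ℤ) ^ (i + 1) - X ^ (j + 1)) =
      ((X : Polynomial ℤ) ^ i - X ^ j) * X := by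
    intro j; ring
  simp only [h, Finset.prod_mul_distrib, Finset.prod_const, Finset.card_range, pow_zero]
  ring

theorem Cpoly_recurrence (d e i : ℕ) (h1 : i + 1 ≤ e) (h2 : e ≤ d) :
    Cpoly d (e - 1) i * (X : Polynomial ℤ) ^ (e - 1) * ((X : Polynomial ℤ) ^ (d - i) - 1) +
      Cpoly d (e - 1) (i + 1) = Cpoly d e (i + 1) := by
  obtain ⟨e', rfl⟩ : ∃ e', e = e' + 1 := ⟨e - 1, by omega⟩
  simp only [Nat.add_sub_cancel]
  have hie : i ≤ e' := by omega
  unfold Cpoly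
  have hE : gaussBinom (e' + 1) (i + 1) =
      gaussBinom e' i + X ^ (i + 1) * gaussBinom e' (i + 1) := rfl
  have hx : (X : Polynomial ℤ) ^ e' = X ^ i * X ^ (e' - i) := by
    rw [← pow_add]
    congr 1
    omega
  rw [hE, prod_succ_factor, hx]
  linear_combination
    (gaussBinom e' i * (∏ j ∈ Finset.range i, ((X : Polynomial ℤ) ^ i - X ^ j)) *
      X ^ i * X ^ (e' - i)) * gaussBinom_key d i +
    (gaussBinom d (i + 1) * (∏ j ∈ Finset.range i, ((X : Polynomial ℤ) ^ i - X ^ j)) *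
      X ^ i * ((X : Polynomial ℤ) ^ (i + 1) - 1)) * gaussBinom_key e' i
end

section
/- Let G = ([n], E) be a graph and i ≥ 1. For each size-i subset P of [n] and each prime power q, the set of i-dimensional totally-isotropic subspaces U of the graphical matrix space B_G ≤ Λ(n,q) whose lexicographically-first nonzero Plücker coordinate is at P is nonempty if and only if P is an independent set of G. -/
open Matrix

def elemAlt {F : Type} [Field F] {n : ℕ} (i j : Fin n) : Matrix (Fin n) (Fin n) F :=
  fun a b => if a = i ∧ b = j then 1 else if a = j ∧ b = i then -1 else 0

noncomputable def graphSpace {n : ℕ} (F : Type) [Field F] (G : SimpleGraph (Fin n)) :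
    Submodule F (Matrix (Fin n) (Fin n) F) :=
  Submodule.span F {M | ∃ i j, G.Adj i j ∧ M = elemAlt i j}

def IsTotallyIsotropic {F : Type} [Field F] {n : ℕ}
    (𝓑 : Submodule F (Matrix (Fin n) (Fin n) F)) (U : Submodule F (Fin n → F)) : Prop :=
  ∀ u ∈ U, ∀ v ∈ U, ∀ B ∈ 𝓑, u ⬝ᵥ B *ᵥ v = 0

def PluckerNonzero {F : Type} [Field F] {n i : ℕ} (T : Matrix (Fin n) (Fin i) F)
    (R : Finset (Fin n)) : Prop :=
  ∃ g : Fin i → Fin n, Function.Injective g ∧ Set.range g = ↑R ∧ (T.submatrix g id).det ≠ 0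

def LexLt {n : ℕ} (A B : Finset (Fin n)) : Prop :=
  List.Lex (· < ·) (A.sort (· ≤ ·)) (B.sort (· ≤ ·))

lemma elemAlt_eq {F : Type} [Field F] {n : ℕ} (a b : Fin n) (hab : a ≠ b) :
    (elemAlt a b : Matrix (Fin n) (Fin n) F)
      = Matrix.single a b 1 - Matrix.single b a 1 := by
  ext r c
  simp only [elemAlt, Matrix.sub_apply, Matrix.single, of_apply]
  by_cases h1 : r = a <;> by_cases h2 : c = b <;> by_cases h3 : r = b <;>
    by_cases h4 : c = a <;> simp_all <;> simp_all [eq_comm]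

lemma dot_elemAlt {F : Type} [Field F] {n : ℕ} (a b : Fin n) (hab : a ≠ b) (u v : Fin n → F) :
    u ⬝ᵥ (elemAlt a b : Matrix (Fin n) (Fin n) F) *ᵥ v = u a * v b - u b * v a := by
  rw [elemAlt_eq a b hab, sub_mulVec, dotProduct_sub, single_mulVec,
    single_mulVec]
  simp [dotProduct, Function.update_apply, mul_ite, Finset.sum_ite_eq']

lemma lexlt_irrefl {n : ℕ} (P : Finset (Fin n)) : ¬ LexLt P P := by
  unfold LexLt
  generalize (P.sort (· ≤ ·)) = l
  intro h
  induction l with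
  | nil => cases h
  | cons x xs ih =>
    cases h with
    | rel h => exact lt_irrefl _ h
    | cons h => exact ih h

lemma mulVec_mem_span {F : Type} [Field F] {n i : ℕ} (T : Matrix (Fin n) (Fin i) F)
    (c : Fin i → F) : T *ᵥ c ∈ Submodule.span F (Set.range Tᵀ) := by
  have h : T *ᵥ c = ∑ k, c k • Tᵀ k := by
    ext r
    simp [mulVec, dotProduct, Finset.sum_apply, mul_comm]
  rw [h]
  exact Submodule.sum_mem _ fun k _ => Submodule.smul_mem _ _ (Submodule.subset_span ⟨k, rfl⟩)

/-- `Gr(i, n, q, G)_P` — the set of `i`-dimensional totally-isotropic subspaces of the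
graphical matrix space `B_G` whose lexicographically-first nonzero Plücker coordinate is
at `P` — is nonempty if and only if `P` is an independent set of `G`. -/
theorem grP_nonempty_iff_indep {F : Type} [Field F] [Fintype F] {n i : ℕ} (hi : 1 ≤ i)
    (G : SimpleGraph (Fin n)) (P : Finset (Fin n)) (hPcard : P.card = i) :
    (∃ (U : Submodule F (Fin n → F)) (T : Matrix (Fin n) (Fin i) F),
        LinearIndependent F Tᵀ ∧ Submodule.span F (Set.range Tᵀ) = U ∧
        IsTotallyIsotropic (graphSpace F G) U ∧ PluckerNonzero T P ∧
        ∀ R : Finset (Fin n), R.card = i → PluckerNonzero T R → ¬LexLt R P) ↔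
      ∀ u ∈ P, ∀ v ∈ P, ¬G.Adj u v := by
  constructor
  · -- forward direction
    rintro ⟨U, T, -, hspan, hiso, ⟨g, hginj, hgrange, hgdet⟩, -⟩ a ha b hb hadj
    have hab : a ≠ b := hadj.ne
    set A : Matrix (Fin i) (Fin i) F := T.submatrix g id with hA
    have hAunit : IsUnit A.det := isUnit_iff_ne_zero.mpr hgdet
    obtain ⟨s, hs⟩ : ∃ s, g s = a := by
      have : a ∈ Set.range g := hgrange ▸ ha
      exact this
    obtain ⟨t, ht⟩ : ∃ t, g t = b := by
      have : b ∈ Set.range g := hgrange ▸ hb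
      exact this
    have hst : s ≠ t := fun h => hab (by rw [← hs, ← ht, h])
    -- key computation lemma
    have key : ∀ (x : Fin i → F) (k : Fin i),
        (T *ᵥ (A⁻¹ *ᵥ x)) (g k) = x k := by
      intro x k
      have h1 : (T *ᵥ (A⁻¹ *ᵥ x)) (g k) = (A *ᵥ (A⁻¹ *ᵥ x)) k := by
        simp [hA, mulVec, dotProduct, submatrix]
      rw [h1, mulVec_mulVec, Matrix.mul_nonsing_inv A hAunit, one_mulVec]
    set u : Fin n → F := T *ᵥ (A⁻¹ *ᵥ Pi.single s 1) with hu
    set v : Fin n → F := T *ᵥ (A⁻¹ *ᵥ Pi.single t 1) with hv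
    have hU : U = Submodule.span F (Set.range Tᵀ) := hspan.symm
    have humem : u ∈ U := hU ▸ mulVec_mem_span T _
    have hvmem : v ∈ U := hU ▸ mulVec_mem_span T _
    have hB : (elemAlt a b : Matrix (Fin n) (Fin n) F) ∈ graphSpace F G :=
      Submodule.subset_span ⟨a, b, hadj, rfl⟩
    have h0 := hiso u humem v hvmem _ hB
    rw [dot_elemAlt a b hab] at h0
    have hua : u a = 1 := by rw [← hs, hu, key]; simp
    have hub : u b = 0 := by rw [← ht, hu, key]; simp [Pi.single_apply, hst.symm]
    have hva : v a = 0 := by rw [← hs, hv, key]; simp [Pi.single_apply, hst]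
    have hvb : v b = 1 := by rw [← ht, hv, key]; simp
    rw [hua, hub, hva, hvb] at h0
    simp at h0
  · -- backward direction
    intro hindep
    set g : Fin i → Fin n := fun k => P.orderEmbOfFin hPcard k with hg
    have hginj : Function.Injective g := (P.orderEmbOfFin hPcard).injective
    have hgrange : Set.range g = ↑P := P.range_orderEmbOfFin hPcard
    have hgmem : ∀ k, g k ∈ P := fun k => by
      have : g k ∈ Set.range g := ⟨k, rfl⟩
      rwa [hgrange] at this
    set T : Matrix (Fin n) (Fin i) F := fun r k => if r = g k then 1 else 0 with hT
    have hTrow : ∀ k, Tᵀ k = Pi.single (g k) 1 := by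
      intro k; ext r; simp [hT, transpose, Pi.single_apply]
    have hlin : LinearIndependent F Tᵀ := by
      have : Tᵀ = (fun j => Pi.single j (1:F)) ∘ g := by
        funext k; rw [hTrow k]; rfl
      rw [this]
      have hb : LinearIndependent F (fun j : Fin n => Pi.single j (1:F)) := by
        have h := (Pi.basisFun F (Fin n)).linearIndependent
        have he : ⇑(Pi.basisFun F (Fin n)) = fun j => Pi.single j (1:F) := by
          funext j; ext r
          simp [Pi.basisFun_apply, Pi.single_apply, Function.update_apply]
        rwa [he] at h
      exact hb.comp g hginj
    refine ⟨Submodule.span F (Set.range Tᵀ), T, hlin, rfl, ?_, ?_, ?_⟩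
    · -- isotropy
      have hsupp : ∀ w ∈ Submodule.span F (Set.range Tᵀ), ∀ r, r ∉ P → w r = 0 := by
        intro w hw
        have hle : Submodule.span F (Set.range Tᵀ) ≤
            {  carrier := {w : Fin n → F | ∀ r, r ∉ P → w r = 0}
               add_mem' := fun h1 h2 r hr => by simp [h1 r hr, h2 r hr]
               zero_mem' := fun r _ => rfl
               smul_mem' := fun c w h r hr => by simp [h r hr] } := by
          rw [Submodule.span_le]
          rintro _ ⟨k, rfl⟩ r hr
          rw [hTrow k]
          have : r ≠ g k := fun h => hr (h ▸ hgmem k)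
          simp [Pi.single_apply, this]
        exact hle hw
      intro u hu v hv B hB
      induction hB using Submodule.span_induction with
      | mem B hBmem =>
        obtain ⟨a, b, hadj, rfl⟩ := hBmem
        rw [dot_elemAlt a b hadj.ne]
        by_cases haP : a ∈ P
        · by_cases hbP : b ∈ P
          · exact absurd hadj (hindep a haP b hbP)
          · rw [hsupp u hu b hbP, hsupp v hv b hbP]; ring
        · rw [hsupp u hu a haP, hsupp v hv a haP]; ring
      | zero => simp
      | add B C _ _ hBih hCih => rw [Matrix.add_mulVec, dotProduct_add, hBih, hCih, add_zero]
      | smul c B _ hBih => rw [Matrix.smul_mulVec, dotProduct_smul, hBih, smul_zero]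
    · -- Plucker at P
      refine ⟨g, hginj, hgrange, ?_⟩
      have : T.submatrix g id = 1 := by
        ext k l
        simp [hT, submatrix, Matrix.one_apply, hginj.eq_iff]
      rw [this, det_one]
      exact one_ne_zero
    · -- minimality
      rintro R hRcard ⟨g', hg'inj, hg'range, hg'det⟩ hlex
      have hRP : R = P := by
        apply Finset.eq_of_subset_of_card_le
        · intro r hr
          by_contra hrP
          obtain ⟨k, hk⟩ : ∃ k, g' k = r := by
            have : r ∈ Set.range g' := hg'range ▸ hr
            exact this
          apply hg'det
          apply Matrix.det_eq_zero_of_row_eq_zero k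
          intro l
          have : g' k ≠ g l := fun h => hrP (hk ▸ h ▸ hgmem l)
          simp [submatrix, hT, this]
        · rw [hPcard, hRcard]
      exact lexlt_irrefl P (hRP ▸ hlex)
end
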